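/- There exists an absolute constant c > 0 with the following property. Let φ : ℂ → ℂ be holomorphic on the open unit disk 𝔻, let M > 0 and 0 < α ≤ 1, and suppose |φ′(z)| ≤ M·|φ′(0)|·(1/(1 − |z|))^{1−α} for every z ∈ 𝔻. Then |φ(z₁) − φ(z₂)| ≤ (c·M/α)·|φ′(0)|·|z₁ − z₂|^α for all z₁, z₂ ∈ 𝔻. -/

import Mathlib

open Complex Metric intervalIntegral MeasureTheory


lemma HL_radial (φ : ℂ → ℂ) (K α : ℝ) (hK : 0 ≤ K) (hα : 0 < α) (hα1 : α ≤ 1)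
    (hφ : DifferentiableOn ℂ φ (ball (0 : ℂ) 1))
    (hd : ∀ z ∈ ball (0 : ℂ) 1, ‖deriv φ z‖ ≤ K * (1 / (1 - ‖z‖)) ^ (1 - α))
    (z : ℂ) (hz : z ∈ ball (0 : ℂ) 1) (r : ℝ) (hr0 : 0 ≤ r) (hr1 : r ≤ 1) :
    ‖φ z - φ ((r : ℂ) * z)‖ ≤ K * (1 - r) ^ α / α := by
  have hzn : ‖z‖ < 1 := by simpa using hz
  have hmem : ∀ t : ℝ, t ∈ Set.uIcc r 1 → ((t : ℂ) * z) ∈ ball (0 : ℂ) 1 := by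
    intro t ht
    rw [Set.uIcc_of_le hr1] at ht
    have h0 : 0 ≤ t := le_trans hr0 ht.1
    have hn : ‖(t : ℂ) * z‖ = t * ‖z‖ := by
      rw [norm_mul, Complex.norm_real, Real.norm_of_nonneg h0]
    simp only [mem_ball, dist_zero_right, hn]
    calc t * ‖z‖ ≤ 1 * ‖z‖ := mul_le_mul_of_nonneg_right ht.2 (norm_nonneg z)
      _ = ‖z‖ := one_mul _
      _ < 1 := hzn
  have hderiv : ∀ t : ℝ, t ∈ Set.uIcc r 1 →
      HasDerivAt (fun s : ℝ => φ ((s : ℂ) * z)) (z * deriv φ ((t : ℂ) * z)) t := by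
    intro t ht
    have h1 : HasDerivAt (fun s : ℝ => (s : ℂ) * z) z t := by
      simpa using (Complex.ofRealCLM.hasDerivAt (x := t)).mul_const z
    have h2 : HasDerivAt φ (deriv φ ((t : ℂ) * z)) ((t : ℂ) * z) :=
      (hφ.differentiableAt (isOpen_ball.mem_nhds (hmem t ht))).hasDerivAt
    have := HasDerivAt.scomp t h2 h1
    simpa [smul_eq_mul, mul_comm, Function.comp_def] using this
  have hcont : ContinuousOn (deriv φ) (ball (0 : ℂ) 1) :=
    ((hφ.analyticOnNhd isOpen_ball).deriv).continuousOn
  have hcont2 : ContinuousOn (fun t : ℝ => z * deriv φ ((t : ℂ) * z)) (Set.uIcc r 1) := by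
    apply ContinuousOn.mul continuousOn_const
    exact hcont.comp (by fun_prop) hmem
  have hint : IntervalIntegrable (fun t : ℝ => z * deriv φ ((t : ℂ) * z)) volume r 1 :=
    hcont2.intervalIntegrable
  have hftc : (∫ t in r..1, z * deriv φ ((t : ℂ) * z)) = φ z - φ ((r : ℂ) * z) := by
    have := intervalIntegral.integral_eq_sub_of_hasDerivAt hderiv hint
    simpa using this
  rw [← hftc]
  have hbint : IntervalIntegrable (fun t : ℝ => K * (1 - t) ^ (α - 1)) volume r 1 := by
    apply IntervalIntegrable.const_mul
    have h : IntervalIntegrable (fun t : ℝ => t ^ (α - 1)) volume (1 - 1) (1 - r) :=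
      intervalIntegrable_rpow' (by linarith)
    simpa using (h.comp_sub_left 1).symm
  have hval : (∫ t in r..1, K * (1 - t) ^ (α - 1)) = K * ((1 - r) ^ α / α) := by
    rw [intervalIntegral.integral_const_mul]
    congr 1
    rw [intervalIntegral.integral_comp_sub_left (fun t => t ^ (α - 1)) 1]
    norm_num
    rw [integral_rpow (Or.inl (by linarith))]
    rw [show α - 1 + 1 = α by ring, Real.zero_rpow hα.ne']
    ring
  have hle : ‖∫ t in r..1, z * deriv φ ((t : ℂ) * z)‖ ≤
      |∫ t in r..1, K * (1 - t) ^ (α - 1)| := by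
    apply intervalIntegral.norm_integral_le_abs_of_norm_le _ hbint
    have h1 : ∀ᵐ t : ℝ, t ≠ 1 := by
      rw [MeasureTheory.ae_iff]
      simpa using Real.volume_singleton (x := 1)
    filter_upwards [MeasureTheory.ae_restrict_mem measurableSet_Ioc, ae_restrict_of_ae h1]
      with t ht ht1
    rw [Set.uIoc_of_le hr1] at ht
    have h0 : 0 < t := lt_of_le_of_lt hr0 ht.1
    have htlt : t < 1 := lt_of_le_of_ne ht.2 ht1
    have hzt : ‖(t : ℂ) * z‖ ≤ t := by
      rw [norm_mul, Complex.norm_real, Real.norm_of_nonneg h0.le]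
      calc t * ‖z‖ ≤ t * 1 := mul_le_mul_of_nonneg_left hzn.le h0.le
        _ = t := mul_one _
    have hball : ((t : ℂ) * z) ∈ ball (0 : ℂ) 1 := hmem t (by
      rw [Set.uIcc_of_le hr1]; exact ⟨ht.1.le, ht.2⟩)
    have hb := hd _ hball
    have h1t : (0:ℝ) < 1 - t := by linarith
    have h1tz : (0:ℝ) < 1 - ‖(t : ℂ) * z‖ := by linarith
    have hstep : (1 / (1 - ‖(t : ℂ) * z‖)) ^ (1 - α) ≤ (1 - t) ^ (α - 1) := by
      have hmono : 1 / (1 - ‖(t : ℂ) * z‖) ≤ 1 / (1 - t) :=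
        one_div_le_one_div_of_le h1t (by linarith)
      have heq : (1 / (1 - t)) ^ (1 - α) = (1 - t) ^ (α - 1) := by
        rw [one_div, Real.inv_rpow h1t.le, show α - 1 = -(1 - α) by ring,
          Real.rpow_neg h1t.le]
      calc (1 / (1 - ‖(t : ℂ) * z‖)) ^ (1 - α) ≤ (1 / (1 - t)) ^ (1 - α) :=
            Real.rpow_le_rpow (by positivity) hmono (by linarith)
        _ = (1 - t) ^ (α - 1) := heq
    calc ‖z * deriv φ ((t : ℂ) * z)‖ = ‖z‖ * ‖deriv φ ((t : ℂ) * z)‖ := norm_mul _ _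
      _ ≤ 1 * ‖deriv φ ((t : ℂ) * z)‖ :=
          mul_le_mul_of_nonneg_right hzn.le (norm_nonneg _)
      _ = ‖deriv φ ((t : ℂ) * z)‖ := one_mul _
      _ ≤ K * (1 / (1 - ‖(t : ℂ) * z‖)) ^ (1 - α) := hb
      _ ≤ K * (1 - t) ^ (α - 1) := mul_le_mul_of_nonneg_left hstep hK
  rw [hval, _root_.abs_of_nonneg (mul_nonneg hK (div_nonneg (Real.rpow_nonneg (by linarith) _) hα.le))] at hle
  calc ‖∫ t in r..1, z * deriv φ ((t : ℂ) * z)‖ ≤ K * ((1 - r) ^ α / α) := hle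
    _ = K * (1 - r) ^ α / α := by ring


lemma HL_rpow_flip {δ α : ℝ} (hδ : 0 < δ) : (1 / δ) ^ (1 - α) = δ ^ (α - 1) := by
  rw [one_div, Real.inv_rpow hδ.le, show α - 1 = -(1 - α) by ring, Real.rpow_neg hδ.le]

lemma HL_segment (φ : ℂ → ℂ) (K α : ℝ) (hK : 0 ≤ K) (hα : 0 < α) (hα1 : α ≤ 1)
    (hφ : DifferentiableOn ℂ φ (ball (0 : ℂ) 1))
    (hd : ∀ z ∈ ball (0 : ℂ) 1, ‖deriv φ z‖ ≤ K * (1 / (1 - ‖z‖)) ^ (1 - α))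
    (δ : ℝ) (hδ0 : 0 < δ) (hδ1 : δ ≤ 1)
    (x y : ℂ) (hx : x ∈ closedBall (0 : ℂ) (1 - δ)) (hy : y ∈ closedBall (0 : ℂ) (1 - δ)) :
    ‖φ y - φ x‖ ≤ K * δ ^ (α - 1) * ‖y - x‖ := by
  have hsub : closedBall (0 : ℂ) (1 - δ) ⊆ ball (0 : ℂ) 1 :=
    closedBall_subset_ball (by linarith)
  set f' : ℂ → (ℂ →L[ℝ] ℂ) := fun w =>
    ((1 : ℂ →L[ℂ] ℂ).smulRight (deriv φ w)).restrictScalars ℝ with hf'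
  have hder : ∀ w ∈ closedBall (0 : ℂ) (1 - δ), HasFDerivWithinAt φ (f' w)
      (closedBall (0 : ℂ) (1 - δ)) w := by
    intro w hw
    exact (((hφ.differentiableAt (isOpen_ball.mem_nhds (hsub hw))).hasDerivAt
      ).hasFDerivAt.restrictScalars ℝ).hasFDerivWithinAt
  have hbound : ∀ w ∈ closedBall (0 : ℂ) (1 - δ), ‖f' w‖ ≤ K * δ ^ (α - 1) := by
    intro w hw
    have hwn : ‖w‖ ≤ 1 - δ := by simpa [dist_zero_right] using hw
    have h1w : δ ≤ 1 - ‖w‖ := by linarith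
    have h1w0 : (0:ℝ) < 1 - ‖w‖ := lt_of_lt_of_le hδ0 h1w
    have hnorm : ‖f' w‖ = ‖deriv φ w‖ := by
      rw [hf', ContinuousLinearMap.norm_restrictScalars,
        ContinuousLinearMap.norm_smulRight_apply, norm_one, one_mul]
    rw [hnorm]
    calc ‖deriv φ w‖ ≤ K * (1 / (1 - ‖w‖)) ^ (1 - α) := hd w (hsub hw)
      _ ≤ K * (1 / δ) ^ (1 - α) := by
          apply mul_le_mul_of_nonneg_left _ hK
          exact Real.rpow_le_rpow (by positivity)
            (one_div_le_one_div_of_le hδ0 h1w) (by linarith)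
      _ = K * δ ^ (α - 1) := by rw [HL_rpow_flip hδ0]
  exact (convex_closedBall _ _).norm_image_sub_le_of_norm_hasFDerivWithin_le
    hder hbound hx hy


/-- Hardy–Littlewood, converse direction: the derivative growth bound implies the
Hölder condition with constant `c * M / α`, `c` an absolute constant. -/
theorem hardy_littlewood_holder_bound :
    ∃ c : ℝ, 0 < c ∧
      ∀ (φ : ℂ → ℂ) (M α : ℝ), 0 < M → 0 < α → α ≤ 1 →
        DifferentiableOn ℂ φ (ball (0 : ℂ) 1) →
        (∀ z ∈ ball (0 : ℂ) 1,
          ‖deriv φ z‖ ≤ M * ‖deriv φ 0‖ * (1 / (1 - ‖z‖)) ^ (1 - α)) →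
        ∀ z₁ ∈ ball (0 : ℂ) 1, ∀ z₂ ∈ ball (0 : ℂ) 1,
          ‖φ z₁ - φ z₂‖ ≤ (c * M / α) * ‖deriv φ 0‖ * ‖z₁ - z₂‖ ^ α := by
  refine ⟨3, by norm_num, ?_⟩
  intro φ M α hM hα hα1 hφ hd z₁ hz₁ z₂ hz₂
  set K := M * ‖deriv φ 0‖ with hKdef
  have hK : 0 ≤ K := mul_nonneg hM.le (norm_nonneg _)
  set δ := ‖z₁ - z₂‖ with hδdef
  have hδ0 : 0 ≤ δ := norm_nonneg _
  have hgoal : (3 * M / α) * ‖deriv φ 0‖ * δ ^ α = 3 * K * δ ^ α / α := by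
    rw [hKdef]; ring
  rw [hgoal]
  rcases eq_or_lt_of_le hδ0 with h0 | hpos
  · have : z₁ = z₂ := by
      have := h0.symm
      rwa [hδdef, norm_eq_zero, sub_eq_zero] at this
    rw [this, sub_self, norm_zero]
    positivity
  rcases le_or_gt 1 δ with hbig | hsmall
  · -- δ ≥ 1 : go through 0
    have h₁ : ‖φ z₁ - φ 0‖ ≤ K / α := by
      have := HL_radial φ K α hK hα hα1 hφ hd z₁ hz₁ 0 le_rfl zero_le_one
      simpa using this
    have h₂ : ‖φ z₂ - φ 0‖ ≤ K / α := by
      have := HL_radial φ K α hK hα hα1 hφ hd z₂ hz₂ 0 le_rfl zero_le_one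
      simpa using this
    have hδα : 1 ≤ δ ^ α := Real.one_le_rpow hbig hα.le
    calc ‖φ z₁ - φ z₂‖ ≤ ‖φ z₁ - φ 0‖ + ‖φ z₂ - φ 0‖ := by
          have := norm_sub_le (φ z₁ - φ 0) (φ z₂ - φ 0)
          simpa [sub_sub_sub_cancel_right] using this
      _ ≤ K / α + K / α := add_le_add h₁ h₂
      _ ≤ 3 * K * δ ^ α / α := by
          rw [← add_div, div_le_div_iff_of_pos_right hα]
          nlinarith
  · -- δ < 1
    set r := 1 - δ with hrdef
    have hr0 : 0 ≤ r := by linarith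
    have hr1 : r ≤ 1 := by linarith
    have h₁ : ‖φ z₁ - φ ((r : ℂ) * z₁)‖ ≤ K * δ ^ α / α := by
      have := HL_radial φ K α hK hα hα1 hφ hd z₁ hz₁ r hr0 hr1
      simpa [hrdef] using this
    have h₂ : ‖φ z₂ - φ ((r : ℂ) * z₂)‖ ≤ K * δ ^ α / α := by
      have := HL_radial φ K α hK hα hα1 hφ hd z₂ hz₂ r hr0 hr1
      simpa [hrdef] using this
    have hmemc : ∀ z : ℂ, z ∈ ball (0:ℂ) 1 → ((r:ℂ) * z) ∈ closedBall (0:ℂ) r := by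
      intro z hz
      have hzn : ‖z‖ < 1 := by simpa using hz
      simp only [mem_closedBall, dist_zero_right, norm_mul, Complex.norm_real,
        Real.norm_of_nonneg hr0]
      nlinarith [norm_nonneg z]
    have hmid : ‖φ ((r:ℂ) * z₁) - φ ((r:ℂ) * z₂)‖ ≤ K * δ ^ α := by
      have hseg := HL_segment φ K α hK hα hα1 hφ hd δ hpos hsmall.le
        ((r:ℂ) * z₂) ((r:ℂ) * z₁) (by rw [hrdef] at hmemc ⊢; exact hmemc z₂ hz₂)
        (by rw [hrdef] at hmemc ⊢; exact hmemc z₁ hz₁)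
      have hdist : ‖(r:ℂ) * z₁ - (r:ℂ) * z₂‖ ≤ δ := by
        rw [← mul_sub, norm_mul, Complex.norm_real, Real.norm_of_nonneg hr0]
        nlinarith
      calc ‖φ ((r:ℂ) * z₁) - φ ((r:ℂ) * z₂)‖ ≤ K * δ ^ (α - 1) * ‖(r:ℂ) * z₁ - (r:ℂ) * z₂‖ :=
            hseg
        _ ≤ K * δ ^ (α - 1) * δ := by
            apply mul_le_mul_of_nonneg_left hdist
            positivity
        _ = K * δ ^ α := by
            rw [mul_assoc, ← Real.rpow_add_one (ne_of_gt hpos), sub_add_cancel]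
    have hmidα : K * δ ^ α ≤ K * δ ^ α / α := by
      rw [le_div_iff₀ hα]
      nlinarith [mul_nonneg hK (Real.rpow_nonneg hδ0 α)]
    calc ‖φ z₁ - φ z₂‖ ≤ ‖φ z₁ - φ ((r:ℂ) * z₁)‖ + ‖φ ((r:ℂ) * z₁) - φ ((r:ℂ) * z₂)‖
          + ‖φ ((r:ℂ) * z₂) - φ z₂‖ := by
          have := dist_triangle4 (φ z₁) (φ ((r:ℂ) * z₁)) (φ ((r:ℂ) * z₂)) (φ z₂)
          simpa [dist_eq_norm] using this
      _ ≤ K * δ ^ α / α + K * δ ^ α / α + K * δ ^ α / α := by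
          refine add_le_add (add_le_add h₁ (hmid.trans hmidα)) ?_
          rw [norm_sub_rev]; exact h₂
      _ = 3 * K * δ ^ α / α := by ring
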